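/- Closed-form solution of the perturbation linear system in the generalized UCB1 case (Corollary 3): let K ≥ 2, let n⋆_{1,T}, ..., n⋆_{K,T} > 0, f(T) > 0, and ε_1, ..., ε_K ∈ ℝ. Substituting I'_{k,1} = 1 and I'_{k,2} = −(1/2)(n⋆_{k,T})^{-3/2} f(T) in the perturbation linear system, its unique solution is ω_1 = (2/f(T)) · (1 + Σ_{k=2}^K (n⋆_{k,T}/n⋆_{1,T})^{3/2})^{-1} · Σ_{k=2}^K (n⋆_{k,T})^{3/2} (ε_1 − ε_k) and, for i = 2, ..., K, ω_i = (2/f(T)) (n⋆_{i,T})^{3/2} (ε_i − ε_1) + (n⋆_{i,T}/n⋆_{1,T})^{3/2} ω_1. -/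

import Mathlib

noncomputable section

lemma key_eq (a0 ak F w0 wk e0 ek : ℝ) (ha0 : a0 ≠ 0) (hak : ak ≠ 0) (hF : F ≠ 0) :
    -(-(1/2) * a0⁻¹ * F) * w0 + (-(1/2) * ak⁻¹ * F) * wk = 1 * e0 - 1 * ek ↔
    wk = 2/F * ak * (ek - e0) + ak/a0 * w0 := by
  field_simp
  constructor <;> intro h
  · linear_combination (-1) * h
  · linear_combination (-1) * h


/-- The conjectured solution of the perturbation linear system in the generalized UCB1
case (`I'_{k,1} = 1`, `I'_{k,2} = −(1/2)(n⋆_{k,T})^{-3/2}·f(T)`), where arm `1` is the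
index `0 : Fin K` and `F = f(T)`:
`ω_1 = (2/F)·(1 + Σ_{k≠1}(n_k/n_1)^{3/2})⁻¹·Σ_{k≠1}(n_k)^{3/2}(ε_1 − ε_k)` and, for
`i ≠ 1`, `ω_i = (2/F)(n_i)^{3/2}(ε_i − ε_1) + (n_i/n_1)^{3/2}·ω_1`. -/
def ucbOmegaSol (K : ℕ) [NeZero K] (n : Fin K → ℝ) (F : ℝ) (ε : Fin K → ℝ) :
    Fin K → ℝ := fun i =>
  let w0 : ℝ :=
    2 / F * (1 + ∑ k ∈ Finset.univ.erase (0 : Fin K), (n k / n 0) ^ ((3 : ℝ) / 2))⁻¹ *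
      ∑ k ∈ Finset.univ.erase (0 : Fin K), n k ^ ((3 : ℝ) / 2) * (ε 0 - ε k)
  if i = 0 then w0
  else 2 / F * n i ^ ((3 : ℝ) / 2) * (ε i - ε 0) + (n i / n 0) ^ ((3 : ℝ) / 2) * w0

/-- **Corollary 3 (closed-form solution of the perturbation linear system in the
generalized UCB1 case).** For `K ≥ 2`, fluid approximations `n⋆_{k,T} > 0`, `f(T) > 0`
and `ε_1, ..., ε_K ∈ ℝ`, substituting `I'_{k,1} = 1` and
`I'_{k,2} = −(1/2)(n⋆_{k,T})^{-3/2}·f(T)` in the perturbation linear system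
(`Σ_k ω_k = 0` and `−I'_{1,2}ω_1 + I'_{k,2}ω_k = I'_{1,1}ε_1 − I'_{k,1}ε_k` for `k ≠ 1`),
its unique solution is given by the closed-form formulas `ucbOmegaSol`. -/
theorem ucb_perturbation_linear_system_solution (K : ℕ) [NeZero K] (hK : 2 ≤ K)
    (n : Fin K → ℝ) (hn : ∀ k, 0 < n k) (F : ℝ) (hF : 0 < F) (ε : Fin K → ℝ) :
    ((∑ k, ucbOmegaSol K n F ε k) = 0 ∧
      ∀ k : Fin K, k ≠ 0 →
        -(-(1 / 2) * n 0 ^ (-(3 : ℝ) / 2) * F) * ucbOmegaSol K n F ε 0 +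
            (-(1 / 2) * n k ^ (-(3 : ℝ) / 2) * F) * ucbOmegaSol K n F ε k
          = 1 * ε 0 - 1 * ε k) ∧
    ∀ w : Fin K → ℝ,
      ((∑ k, w k) = 0 ∧
        ∀ k : Fin K, k ≠ 0 →
          -(-(1 / 2) * n 0 ^ (-(3 : ℝ) / 2) * F) * w 0 +
              (-(1 / 2) * n k ^ (-(3 : ℝ) / 2) * F) * w k
            = 1 * ε 0 - 1 * ε k) →
      w = ucbOmegaSol K n F ε := by
  -- abbreviations
  set A : Fin K → ℝ := fun k => n k ^ ((3 : ℝ) / 2) with hA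
  have hApos : ∀ k, 0 < A k := fun k => Real.rpow_pos_of_pos (hn k) _
  have hAne : ∀ k, A k ≠ 0 := fun k => (hApos k).ne'
  have hneg : ∀ k : Fin K, n k ^ (-(3 : ℝ) / 2) = (A k)⁻¹ := fun k => by
    rw [neg_div, Real.rpow_neg (hn k).le]
  have hdivA : ∀ k : Fin K, (n k / n 0) ^ ((3 : ℝ) / 2) = A k / A 0 := fun k =>
    Real.div_rpow (hn k).le (hn 0).le _
  set S : ℝ := ∑ k ∈ Finset.univ.erase (0 : Fin K), (n k / n 0) ^ ((3 : ℝ) / 2) with hS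
  have hSnonneg : 0 ≤ S := Finset.sum_nonneg fun k _ =>
    Real.rpow_nonneg (div_nonneg (hn k).le (hn 0).le) _
  have hSne : (1 : ℝ) + S ≠ 0 := by positivity
  set E : ℝ := ∑ k ∈ Finset.univ.erase (0 : Fin K), A k * (ε 0 - ε k) with hE
  set w0 : ℝ := 2 / F * (1 + S)⁻¹ * E with hw0
  have hsol0 : ucbOmegaSol K n F ε 0 = w0 := by simp [ucbOmegaSol, hw0, hS, hE, hA]
  have hsolk : ∀ k : Fin K, k ≠ 0 →
      ucbOmegaSol K n F ε k = 2 / F * A k * (ε k - ε 0) + A k / A 0 * w0 := by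
    intro k hk
    simp only [ucbOmegaSol, if_neg hk]
    rw [hdivA k]
  -- the key identity for w0
  have hw0id : w0 * (1 + S) = 2 / F * E := by
    rw [hw0]
    field_simp
  -- sum over erase of A k / A 0 equals S
  have hSalt : S = ∑ k ∈ Finset.univ.erase (0 : Fin K), A k / A 0 := by
    rw [hS]; exact Finset.sum_congr rfl fun k _ => hdivA k
  -- generic sum computation
  have sum_formula : ∀ w : Fin K → ℝ,
      (∀ k : Fin K, k ≠ 0 → w k = 2 / F * A k * (ε k - ε 0) + A k / A 0 * w 0) →
      (∑ k, w k) = w 0 * (1 + S) - 2 / F * E := by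
    intro w hw
    rw [← Finset.add_sum_erase _ w (Finset.mem_univ (0 : Fin K))]
    rw [Finset.sum_congr rfl fun k hk => hw k (Finset.ne_of_mem_erase hk)]
    rw [Finset.sum_add_distrib, ← Finset.sum_mul, ← hSalt]
    have : ∑ k ∈ Finset.univ.erase (0 : Fin K), 2 / F * A k * (ε k - ε 0)
        = -(2 / F * E) := by
      rw [hE, Finset.mul_sum, ← Finset.sum_neg_distrib]
      exact Finset.sum_congr rfl fun k _ => by ring
    rw [this]; ring
  refine ⟨⟨?_, ?_⟩, ?_⟩
  · -- sum of the solution is 0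
    have := sum_formula (ucbOmegaSol K n F ε) (fun k hk => by rw [hsolk k hk, hsol0])
    rw [this, hsol0, hw0id]; ring
  · -- equations
    intro k hk
    rw [hneg 0, hneg k, hsol0, key_eq _ _ _ _ _ _ _ (hAne 0) (hAne k) hF.ne']
    exact hsolk k hk
  · -- uniqueness
    intro w ⟨hsum, heq⟩
    have hwk : ∀ k : Fin K, k ≠ 0 → w k = 2 / F * A k * (ε k - ε 0) + A k / A 0 * w 0 := by
      intro k hk
      rw [← key_eq _ _ _ _ _ _ _ (hAne 0) (hAne k) hF.ne', ← hneg 0, ← hneg k]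
      exact heq k hk
    have h0 : w 0 = w0 := by
      have := sum_formula w hwk
      rw [hsum] at this
      have h1 : w 0 * (1 + S) = 2 / F * E := by linarith
      exact mul_right_cancel₀ hSne (h1.trans hw0id.symm)
    funext k
    by_cases hk : k = 0
    · rw [hk, hsol0, h0]
    · rw [hwk k hk, hsolk k hk, h0]
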